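/- Let K be a field of characteristic zero, q ∈ K nonzero and not a root of unity, and σ_x, σ_y the q-shift automorphisms of K[x,y] with x ↦ qx, y ↦ qy. If p ∈ K[x,y] is irreducible and there exist integers m, n, not both zero, with σ_x^m σ_y^n(p) an associate of p, then p(x,y) = x^α y^β P(x^λ y^μ) for some P ∈ K[z], integers α, β ≥ 0, and integers λ, μ not both zero. -/

import Mathlib

open MvPolynomial

section Helpers

variable {K : Type*} [Field K]

private lemma qs_mono2 (d : Fin 2 →₀ ℕ) (c : K) :
    (monomial d c : MvPolynomial (Fin 2) K) = C c * X 0 ^ d 0 * X 1 ^ d 1 := by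
  rw [monomial_eq, Finsupp.prod_fintype _ _ (fun i => pow_zero _), Fin.prod_univ_two, mul_assoc]

variable (σ : RingAut (MvPolynomial (Fin 2) K)) (a b : K)

private lemma qs_ringaut_mul_apply (τ : RingAut (MvPolynomial (Fin 2) K))
    (x : MvPolynomial (Fin 2) K) : (σ * τ) x = σ (τ x) := rfl

private lemma qs_ringaut_apply_inv (x : MvPolynomial (Fin 2) K) : σ (σ⁻¹ x) = x :=
  σ.apply_symm_apply x

private lemma qs_coeff_aut (hC : ∀ c : K, σ (C c) = C c) (hX0 : σ (X 0) = C a * X 0)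
    (hX1 : σ (X 1) = C b * X 1) (p : MvPolynomial (Fin 2) K) (d : Fin 2 →₀ ℕ) :
    coeff d (σ p) = a ^ d 0 * b ^ d 1 * coeff d p := by
  have key : σ p = ∑ e ∈ p.support, monomial e (a ^ e 0 * b ^ e 1 * coeff e p) := by
    conv_lhs => rw [p.as_sum]
    rw [map_sum]
    refine Finset.sum_congr rfl fun e _ => ?_
    rw [qs_mono2, map_mul, map_mul, hC, map_pow, map_pow, hX0, hX1, qs_mono2,
      mul_pow, mul_pow, ← C_pow, ← C_pow, C_mul, C_mul]
    ring
  rw [key, coeff_sum]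
  simp only [coeff_monomial]
  rw [Finset.sum_ite_eq' p.support d (fun e => a ^ e 0 * b ^ e 1 * coeff e p)]
  by_cases h : d ∈ p.support
  · simp [h]
  · simp [h, notMem_support_iff.mp h]

private lemma qs_aut_pow_C (hC : ∀ c : K, σ (C c) = C c) (k : ℕ) (c : K) :
    (σ ^ k) (C c) = C c := by
  induction k with
  | zero => rfl
  | succ n ih => rw [pow_succ, qs_ringaut_mul_apply, hC, ih]

private lemma qs_aut_pow_X0 (hX0 : σ (X 0) = C a * X 0) (hC : ∀ c : K, σ (C c) = C c) (k : ℕ) :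
    (σ ^ k) (X 0) = C (a ^ k) * X 0 := by
  induction k with
  | zero => simp
  | succ n ih => rw [pow_succ', qs_ringaut_mul_apply, ih, map_mul, hX0, hC,
      ← mul_assoc, ← C_mul, ← pow_succ]

private lemma qs_aut_pow_X1 (hX1 : σ (X 1) = C b * X 1) (hC : ∀ c : K, σ (C c) = C c) (k : ℕ) :
    (σ ^ k) (X 1) = C (b ^ k) * X 1 := by
  induction k with
  | zero => simp
  | succ n ih => rw [pow_succ', qs_ringaut_mul_apply, ih, map_mul, hX1, hC,
      ← mul_assoc, ← C_mul, ← pow_succ]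

private lemma qs_aut_inv_C (hC : ∀ c : K, σ (C c) = C c) (c : K) : σ⁻¹ (C c) = C c :=
  σ.injective (by rw [qs_ringaut_apply_inv, hC])

private lemma qs_aut_inv_X0 (ha : a ≠ 0) (hX0 : σ (X 0) = C a * X 0)
    (hC : ∀ c : K, σ (C c) = C c) : σ⁻¹ (X 0) = C a⁻¹ * X 0 := by
  apply σ.injective
  rw [qs_ringaut_apply_inv, map_mul, hC, hX0, ← mul_assoc, ← C_mul, inv_mul_cancel₀ ha, C_1,
    one_mul]

private lemma qs_aut_inv_X1 (hb : b ≠ 0) (hX1 : σ (X 1) = C b * X 1)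
    (hC : ∀ c : K, σ (C c) = C c) : σ⁻¹ (X 1) = C b⁻¹ * X 1 := by
  apply σ.injective
  rw [qs_ringaut_apply_inv, map_mul, hC, hX1, ← mul_assoc, ← C_mul, inv_mul_cancel₀ hb, C_1,
    one_mul]

private lemma qs_coeff_aut_zpow (ha : a ≠ 0) (hb : b ≠ 0) (hC : ∀ c : K, σ (C c) = C c)
    (hX0 : σ (X 0) = C a * X 0) (hX1 : σ (X 1) = C b * X 1) (k : ℤ)
    (p : MvPolynomial (Fin 2) K) (d : Fin 2 →₀ ℕ) :
    coeff d ((σ ^ k) p) = (a ^ k) ^ d 0 * (b ^ k) ^ d 1 * coeff d p := by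
  cases k with
  | ofNat n =>
      rw [Int.ofNat_eq_coe, zpow_natCast, zpow_natCast, zpow_natCast]
      exact qs_coeff_aut (σ ^ n) (a ^ n) (b ^ n) (qs_aut_pow_C σ hC n)
        (qs_aut_pow_X0 σ a hX0 hC n) (qs_aut_pow_X1 σ b hX1 hC n) p d
  | negSucc n =>
      rw [zpow_negSucc, zpow_negSucc, zpow_negSucc, ← inv_pow, ← inv_pow, ← inv_pow]
      exact qs_coeff_aut (σ⁻¹ ^ (n + 1)) (a⁻¹ ^ (n + 1)) (b⁻¹ ^ (n + 1))
        (qs_aut_pow_C σ⁻¹ (qs_aut_inv_C σ hC) (n + 1))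
        (qs_aut_pow_X0 σ⁻¹ a⁻¹ (qs_aut_inv_X0 σ a ha hX0 hC) (qs_aut_inv_C σ hC) (n + 1))
        (qs_aut_pow_X1 σ⁻¹ b⁻¹ (qs_aut_inv_X1 σ b hb hX1 hC) (qs_aut_inv_C σ hC) (n + 1)) p d

end Helpers

private lemma qs_line_step (m n : ℤ) (hmn : ¬(m = 0 ∧ n = 0)) :
    ∃ lam mu : ℤ, ¬(lam = 0 ∧ mu = 0) ∧
      ∀ i j i' j' : ℤ, m * i + n * j = m * i' + n * j' →
        ∃ t : ℤ, i' - i = t * lam ∧ j' - j = t * mu := by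
  set g : ℤ := (Int.gcd m n : ℤ) with hg
  have hgpos : 0 < Int.gcd m n := Int.gcd_pos_iff.mpr (by tauto)
  have hg0 : g ≠ 0 := by positivity
  set m' := m / g with hm'
  set n' := n / g with hn'
  have hcop : Int.gcd m' n' = 1 := Int.gcd_div_gcd_div_gcd hgpos
  have hmm : g * m' = m := Int.mul_ediv_cancel' (Int.gcd_dvd_left m n)
  have hnn : g * n' = n := Int.mul_ediv_cancel' (Int.gcd_dvd_right m n)
  refine ⟨n', -m', ?_, ?_⟩
  · rintro ⟨h1, h2⟩
    rw [h1] at hcop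
    have : m' = 0 := by omega
    rw [this] at hcop
    simp [Int.gcd] at hcop
  · intro i j i' j' heq
    have key : m' * (i' - i) = n' * (j - j') := by
      have : g * (m' * (i' - i)) = g * (n' * (j - j')) := by
        rw [← mul_assoc, ← mul_assoc, hmm, hnn]; ring_nf; linarith
      exact mul_left_cancel₀ hg0 this
    by_cases hn'0 : n' = 0
    · have hm'1 : m'.natAbs = 1 := by
        rw [hn'0] at hcop; simpa [Int.gcd] using hcop
      have hm'sq : m' * m' = 1 := by
        have : m' = 1 ∨ m' = -1 := by omega
        rcases this with h | h <;> rw [h] <;> ring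
      have hii : i' - i = 0 := by
        rw [hn'0, zero_mul] at key
        have : m' ≠ 0 := by intro h; rw [h] at hm'1; simp at hm'1
        exact (mul_eq_zero.mp key).resolve_left this
      exact ⟨(j - j') * m', by rw [hn'0, mul_zero, hii], by
        have h3 : (j - j') * m' * -m' = -((j - j') * (m' * m')) := by ring
        rw [h3, hm'sq, mul_one]; ring⟩
    · have hdvd : n' ∣ (i' - i) := by
        have h1 : n' ∣ m' * (i' - i) := ⟨j - j', key⟩
        exact Int.dvd_of_dvd_mul_right_of_gcd_one h1 (by rwa [Int.gcd_comm])
      obtain ⟨t, ht⟩ := hdvd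
      refine ⟨t, by rw [ht]; ring, ?_⟩
      have h1 : m' * (n' * t) = n' * (j - j') := by rw [← ht]; exact key
      have h2 : m' * t = j - j' := by
        apply mul_left_cancel₀ hn'0; linarith [h1]
      linarith [h2]

private lemma qs_pow_split {F : Type*} [Field F] (x : F) (hx : x ≠ 0) (A B : ℕ) (l : ℤ) (s : ℕ)
    (h : (B : ℤ) = A + s * l) : x ^ B = x ^ A * (x ^ l) ^ s := by
  rw [← zpow_natCast x B, h, zpow_add₀ hx, zpow_natCast, zpow_mul', zpow_natCast]

private lemma qs_q_zpow_inj {K : Type*} [Field K] (q : K)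
    (hqru : ∀ n : ℕ, 0 < n → q ^ n ≠ 1) (z : ℤ) (hz : q ^ z = 1) : z = 0 := by
  by_contra h
  rcases lt_or_gt_of_ne h with hneg | hpos
  · have h1 : q ^ (-z) = 1 := by rw [zpow_neg, hz, inv_one]
    have h2 : q ^ ((-z).toNat) = 1 := by
      rw [← zpow_natCast, Int.toNat_of_nonneg (by omega)]; exact h1
    exact hqru (-z).toNat (by omega) h2
  · have h2 : q ^ (z.toNat) = 1 := by
      rw [← zpow_natCast, Int.toNat_of_nonneg (by omega)]; exact hz
    exact hqru z.toNat (by omega) h2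

/-- In the q-shift case, an irreducible polynomial `p ∈ K[x,y]` with
`σ_x^m σ_y^n(p)` an associate of `p` for some `(m,n) ≠ (0,0)` has the form
`x^α y^β P(x^λ y^μ)`, the Laurent monomial `x^λ y^μ` being interpreted in the
fraction field of `K[x,y]`. -/
theorem integer_linear_qshift (K : Type*) [Field K] [CharZero K]
    (q : K) (hq0 : q ≠ 0) (hqru : ∀ n : ℕ, 0 < n → q ^ n ≠ 1)
    (σx σy : RingAut (MvPolynomial (Fin 2) K))
    (hxX : σx (X 0) = C q * X 0) (hxY : σx (X 1) = X 1)
    (hxC : ∀ c : K, σx (C c) = C c)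
    (hyX : σy (X 0) = X 0) (hyY : σy (X 1) = C q * X 1)
    (hyC : ∀ c : K, σy (C c) = C c)
    (p : MvPolynomial (Fin 2) K) (hirr : Irreducible p)
    (hassoc : ∃ m n : ℤ, ¬(m = 0 ∧ n = 0) ∧
      ∃ c : K, c ≠ 0 ∧ (σx ^ m) ((σy ^ n) p) = C c * p) :
    ∃ (P : Polynomial K) (α β : ℕ) (lam mu : ℤ), ¬(lam = 0 ∧ mu = 0) ∧
      algebraMap (MvPolynomial (Fin 2) K) (FractionRing (MvPolynomial (Fin 2) K)) p =
        algebraMap (MvPolynomial (Fin 2) K) (FractionRing (MvPolynomial (Fin 2) K))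
            (X 0 ^ α * X 1 ^ β) *
          Polynomial.eval₂
            ((algebraMap (MvPolynomial (Fin 2) K)
              (FractionRing (MvPolynomial (Fin 2) K))).comp (C : K →+* MvPolynomial (Fin 2) K))
            ((algebraMap (MvPolynomial (Fin 2) K)
                (FractionRing (MvPolynomial (Fin 2) K)) (X 0)) ^ lam *
              (algebraMap (MvPolynomial (Fin 2) K)
                (FractionRing (MvPolynomial (Fin 2) K)) (X 1)) ^ mu) P := by
  obtain ⟨m, n, hmn, c, hc0, heq⟩ := hassoc
  have hp0 : p ≠ 0 := hirr.ne_zero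
  -- Step 1: support lies on a line m*i + n*j = const
  have hcoeff : ∀ d : Fin 2 →₀ ℕ, d ∈ p.support → q ^ (m * d 0 + n * d 1) = c := by
    intro d hd
    have hA := qs_coeff_aut_zpow σx q 1 hq0 one_ne_zero hxC hxX
      (by rw [C_1, one_mul]; exact hxY) m ((σy ^ n) p) d
    have hB := qs_coeff_aut_zpow σy 1 q one_ne_zero hq0 hyC
      (by rw [C_1, one_mul]; exact hyX) hyY n p d
    rw [heq, coeff_C_mul] at hA
    rw [hB] at hA
    simp only [one_zpow, one_pow, one_mul, mul_one] at hA
    have hcd : coeff d p ≠ 0 := mem_support_iff.mp hd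
    have hkey : (q ^ m) ^ d 0 * (q ^ n) ^ d 1 = c := by
      have h2 : ((q ^ m) ^ d 0 * (q ^ n) ^ d 1) * coeff d p = c * coeff d p := by
        rw [hA]; ring
      exact mul_right_cancel₀ hcd h2
    rw [← hkey, zpow_add₀ hq0, zpow_mul, zpow_mul, zpow_natCast, zpow_natCast]
  have hline : ∀ d ∈ p.support, ∀ d' ∈ p.support,
      m * (d 0 : ℤ) + n * (d 1 : ℤ) = m * (d' 0 : ℤ) + n * (d' 1 : ℤ) := by
    intro d hd d' hd'
    have h1 := hcoeff d hd
    have h2 := hcoeff d' hd'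
    have h3 : q ^ ((m * (d 0 : ℤ) + n * d 1) - (m * (d' 0 : ℤ) + n * d' 1)) = 1 := by
      rw [zpow_sub₀ hq0, h1, h2, div_self hc0]
    have := qs_q_zpow_inj q hqru _ h3
    omega
  -- Step 2: direction vector
  obtain ⟨lam, mu, hlm, hstep⟩ := qs_line_step m n hmn
  obtain ⟨d₀, hd₀⟩ := Finset.nonempty_of_ne_empty (fun h => hp0 (support_eq_empty.mp h))
  -- a well-defined parametrization of the support along the line
  set tf : (Fin 2 →₀ ℕ) → ℤ := fun d =>
    if lam = 0 then ((d 1 : ℤ) - d₀ 1) / mu else ((d 0 : ℤ) - d₀ 0) / lam with htf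
  have htf_spec : ∀ d ∈ p.support,
      (d 0 : ℤ) - d₀ 0 = tf d * lam ∧ (d 1 : ℤ) - d₀ 1 = tf d * mu := by
    intro d hd
    obtain ⟨t, ht1, ht2⟩ := hstep (d₀ 0) (d₀ 1) (d 0) (d 1) (hline d₀ hd₀ d hd)
    have htf_eq : tf d = t := by
      rw [htf]
      by_cases hl : lam = 0
      · have hmu : mu ≠ 0 := fun h => hlm ⟨hl, h⟩
        simp only [hl, if_true, ht2]
        exact Int.mul_ediv_cancel t hmu
      · simp only [hl, if_false, ht1]
        exact Int.mul_ediv_cancel t hl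
    rw [htf_eq]
    exact ⟨ht1, ht2⟩
  -- minimize tf over the support
  obtain ⟨ds, hds, hmin⟩ := p.support.exists_min_image tf ⟨d₀, hd₀⟩
  -- exponents
  have hspec : ∀ d ∈ p.support,
      (d 0 : ℤ) = ds 0 + ((tf d - tf ds).toNat : ℤ) * lam ∧
      (d 1 : ℤ) = ds 1 + ((tf d - tf ds).toNat : ℤ) * mu := by
    intro d hd
    obtain ⟨h1, h2⟩ := htf_spec d hd
    obtain ⟨h3, h4⟩ := htf_spec ds hds
    have hge : tf ds ≤ tf d := hmin d hd
    have htn : ((tf d - tf ds).toNat : ℤ) = tf d - tf ds := Int.toNat_of_nonneg (by omega)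
    constructor
    · rw [htn]; nlinarith [h1, h3]
    · rw [htn]; nlinarith [h2, h4]
  refine ⟨∑ d ∈ p.support, Polynomial.monomial ((tf d - tf ds).toNat) (coeff d p),
    ds 0, ds 1, lam, mu, hlm, ?_⟩
  set F := FractionRing (MvPolynomial (Fin 2) K)
  set φ := algebraMap (MvPolynomial (Fin 2) K) F with hφ
  have hinj : Function.Injective φ := IsFractionRing.injective _ _
  have hx : φ (X 0) ≠ 0 := fun h => X_ne_zero 0 (hinj (by rw [h, map_zero]))
  have hy : φ (X 1) ≠ 0 := fun h => X_ne_zero 1 (hinj (by rw [h, map_zero]))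
  rw [Polynomial.eval₂_finset_sum]
  simp only [Polynomial.eval₂_monomial, RingHom.comp_apply]
  conv_lhs => rw [p.as_sum]
  rw [map_sum, map_mul, map_pow, map_pow, Finset.mul_sum]
  refine Finset.sum_congr rfl fun d hd => ?_
  obtain ⟨h1, h2⟩ := hspec d hd
  rw [qs_mono2, map_mul, map_mul, map_pow, map_pow,
    qs_pow_split (φ (X 0)) hx (ds 0) (d 0) lam _ h1,
    qs_pow_split (φ (X 1)) hy (ds 1) (d 1) mu _ h2, mul_pow]
  ring
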